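/- In the winner-bid auction with v_l < v_h, v_l > 3v_h/8, and separating bid p with v_l/2 + 1 < p < v_l/2 + (v_h/2 − v_l/2)/5 + 4/5, the profile σ_h = δ_p, σ_l = uniform on {y, y+1, ..., p−1} with y = v_l/2 − 3(p − 1 − v_l/2) and n = p − y = 4(p−1−v_l/2) + 1, is a Nash equilibrium in which p is the unique best response for the higher-valuation agent. -/
import Mathlib
open Finset Filter


/-- Utility in the winner-bid auction for an agent with value `v` bidding `b`
when the opponent bids `c`: the higher bidder wins the object and pays their own
bid to the other agent; ties are broken uniformly at random. -/
noncomputable def util (v b c : ℕ) : ℝ :=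
  if c < b then (v : ℝ) - b
  else if b < c then (c : ℝ)
  else (((v : ℝ) - b) + b) / 2

/-- Expected utility of bidding `b` against the mixed strategy `σ` of the opponent. -/
noncomputable def eu (pbar v : ℕ) (σ : ℕ → ℝ) (b : ℕ) : ℝ :=
  ∑ c ∈ range (pbar + 1), σ c * util v b c

/-- A mixed strategy on the bid space `{0,...,pbar}`. -/
def IsStrategy (pbar : ℕ) (σ : ℕ → ℝ) : Prop :=
  (∀ b, 0 ≤ σ b) ∧ (∑ b ∈ range (pbar + 1), σ b = 1) ∧ ∀ b, pbar < b → σ b = 0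

/-- Nash equilibrium of the winner-bid auction with valuations `vl` (agent l) and
`vh` (agent h). -/
def IsNash (pbar vl vh : ℕ) (σl σh : ℕ → ℝ) : Prop :=
  IsStrategy pbar σl ∧ IsStrategy pbar σh ∧
  (∀ b ∈ range (pbar + 1), 0 < σl b →
    ∀ b' ∈ range (pbar + 1), eu pbar vl σh b' ≤ eu pbar vl σh b) ∧
  (∀ b ∈ range (pbar + 1), 0 < σh b →
    ∀ b' ∈ range (pbar + 1), eu pbar vh σl b' ≤ eu pbar vh σl b)

/-- Expected payoff of the agent with value `v` playing `σown` against `σopp`. -/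
noncomputable def payoff (pbar v : ℕ) (σown σopp : ℕ → ℝ) : ℝ :=
  ∑ b ∈ range (pbar + 1), σown b * eu pbar v σopp b

/-- Probability that the agent playing `σown` receives the object. -/
noncomputable def winProb (pbar : ℕ) (σown σopp : ℕ → ℝ) : ℝ :=
  ∑ b ∈ range (pbar + 1), ∑ c ∈ range (pbar + 1),
    σown b * σopp c * (if c < b then 1 else if b < c then 0 else 1 / 2)

/-- An equilibrium is efficient if the higher-valuation agent (playing `σh`)
receives the object with probability one, i.e., the lower-valuation agent
receives it with probability zero. -/
def Efficient (pbar : ℕ) (σl σh : ℕ → ℝ) : Prop := winProb pbar σl σh = 0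

/-- The pure strategy bidding `b`. -/
noncomputable def pureS (b : ℕ) : ℕ → ℝ := fun c => if c = b then 1 else 0

/-- Weak payoff monotonicity for the agent with value `v` playing `σown` against `σopp`. -/
def WPMon (pbar v : ℕ) (σown σopp : ℕ → ℝ) : Prop :=
  ∀ m ∈ range (pbar + 1), ∀ n ∈ range (pbar + 1),
    σown n < σown m → eu pbar v σopp n < eu pbar v σopp m

/-- (Full) payoff monotonicity for the agent with value `v`. -/
def PMon (pbar v : ℕ) (σown σopp : ℕ → ℝ) : Prop :=
  ∀ m ∈ range (pbar + 1), ∀ n ∈ range (pbar + 1),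
    (eu pbar v σopp n ≤ eu pbar v σopp m ↔ σown n ≤ σown m)

/-- Empirical equilibrium: a Nash equilibrium that is the pointwise limit of a
sequence of weakly payoff monotone strategy profiles. -/
def IsEmpirical (pbar vl vh : ℕ) (σl σh : ℕ → ℝ) : Prop :=
  IsNash pbar vl vh σl σh ∧
  ∃ s : ℕ → (ℕ → ℝ) × (ℕ → ℝ),
    (∀ n, IsStrategy pbar (s n).1 ∧ IsStrategy pbar (s n).2 ∧
      WPMon pbar vl (s n).1 (s n).2 ∧ WPMon pbar vh (s n).2 (s n).1) ∧
    ∀ b, Tendsto (fun n => (s n).1 b) atTop (nhds (σl b)) ∧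
         Tendsto (fun n => (s n).2 b) atTop (nhds (σh b))


lemma util_lt (v b c : ℕ) (h : c < b) : util v b c = (v:ℝ) - b := by simp [util, h]

lemma util_gt (v b c : ℕ) (h : b < c) : util v b c = (c:ℝ) := by
  simp [util, h, Nat.lt_asymm h]

lemma util_eq (v b : ℕ) : util v b b = (v:ℝ)/2 := by
  simp only [util, lt_irrefl, if_false]
  ring

lemma eu_pure (pbar v p b : ℕ) (hp : p ≤ pbar) :
    eu pbar v (pureS p) b = util v b p := by
  unfold eu pureS
  rw [Finset.sum_eq_single p]
  · simp
  · intro c _ hc; simp [hc]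
  · intro h; exact absurd (Finset.mem_range.2 (by omega)) h

lemma eu_unif (pbar v y p n b : ℕ) (hp : p ≤ pbar) :
    eu pbar v (fun c => if y ≤ c ∧ c < p then (1:ℝ)/n else 0) b
      = (1/n) * ∑ c ∈ Finset.Ico y p, util v b c := by
  unfold eu
  rw [Finset.mul_sum,
    ← Finset.sum_subset (show Finset.Ico y p ⊆ range (pbar+1) by
      intro c hc; simp only [Finset.mem_Ico] at hc; simp only [Finset.mem_range]; omega)]
  · apply Finset.sum_congr rfl
    intro c hc
    simp only [Finset.mem_Ico] at hc
    dsimp only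
    rw [if_pos hc]
  · intro c _ hc
    simp only [Finset.mem_Ico, not_and, not_lt] at hc
    have hnc : ¬(y ≤ c ∧ c < p) := by omega
    dsimp only
    rw [if_neg hnc, zero_mul]

theorem stmt15 (vl vh pbar : ℕ) (hvl : 0 < vl) (hevl : Even vl) (hevh : Even vh)
    (hlt : vl < vh) (hpbar : vh / 2 + 2 ≤ pbar)
    (hES : 4 < vh - vl) (hratio : 3 * vh < 8 * vl)
    (p y n : ℕ) (hp1 : vl / 2 + 1 < p)
    (hp2 : (p : ℝ) < (vl : ℝ) / 2 + ((vh : ℝ) / 2 - (vl : ℝ) / 2) / 5 + 4 / 5)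
    (hy : y + 3 * (p - 1 - vl / 2) = vl / 2)
    (hn : n = 4 * (p - 1 - vl / 2) + 1)
    (σl σh : ℕ → ℝ)
    (hσl : σl = fun c => if y ≤ c ∧ c < p then (1 : ℝ) / n else 0)
    (hσh : σh = pureS p) :
    IsNash pbar vl vh σl σh ∧
    ∀ b ∈ range (pbar + 1), b ≠ p → eu pbar vh σl b < eu pbar vh σl p := by
    -- basic arithmetic setup
  obtain ⟨rl, hrl⟩ := hevl
  obtain ⟨rh, hrh⟩ := hevh
  have hcl : (vl:ℝ) = 2 * rl := by rw [hrl]; push_cast; ring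
  have hch : (vh:ℝ) = 2 * rh := by rw [hrh]; push_cast; ring
  set k := p - 1 - vl/2 with hk
  have hk1 : 1 ≤ k := by omega
  have hpk : p = rl + 1 + k := by omega
  have hyk : y + 3*k = rl := by omega
  have hnk : n = 4*k + 1 := by omega
  have hd : rl + 5*k + 2 ≤ rh := by
    have h5 : (5*p : ℝ) < 4*rl + rh + 4 := by
      rw [hcl, hch] at hp2; push_cast; linarith
    have h5' : 5*p < 4*rl + rh + 4 := by exact_mod_cast h5
    omega
  have hpn : p = y + n := by omega
  have hhp : p + n ≤ rh := by omega
  have hppbar : p + n + 2 ≤ pbar := by omega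
  have hn0 : 0 < n := by omega
  have hnR : (0:ℝ) < (n:ℝ) := by exact_mod_cast hn0
  have hnne : (n:ℝ) ≠ 0 := ne_of_gt hnR
  have hpnR : (p:ℝ) = y + n := by exact_mod_cast hpn
  have hhpR : (p:ℝ) + n ≤ rh := by exact_mod_cast hhp
  have hppbar' : p ≤ pbar := by omega
  -- the key strict best-response property for h
  have key : ∀ b ∈ range (pbar + 1), b ≠ p → eu pbar vh σl b < eu pbar vh σl p := by
    intro b hb hbp
    rw [hσl, eu_unif pbar vh y p n b hppbar', eu_unif pbar vh y p n p hppbar']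
    have hSp : ∑ c ∈ Finset.Ico y p, util vh p c = (n:ℝ) * ((vh:ℝ) - p) := by
      rw [Finset.sum_congr rfl (fun c hc => util_lt vh p c (by
        simp only [Finset.mem_Ico] at hc; exact hc.2))]
      rw [Finset.sum_const, Nat.card_Ico, nsmul_eq_mul]
      congr 1
      exact_mod_cast congrArg (Nat.cast : ℕ → ℝ) (show p - y = n by omega)
    rw [hSp]
    have heup : (1:ℝ)/n * ((n:ℝ) * ((vh:ℝ) - p)) = (vh:ℝ) - p := by
      field_simp
    rw [heup]
    rcases lt_or_ge b y with hby | hby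
    · -- b below support: eu = average of support ≤ p - 1
      have hSb : ∑ c ∈ Finset.Ico y p, util vh b c = ∑ c ∈ Finset.Ico y p, (c:ℝ) := by
        refine Finset.sum_congr rfl (fun c hc => util_gt vh b c ?_)
        simp only [Finset.mem_Ico] at hc; omega
      have hbd : ∑ c ∈ Finset.Ico y p, (c:ℝ) ≤ (n:ℝ) * ((p:ℝ) - 1) := by
        have := Finset.sum_le_card_nsmul (Finset.Ico y p) (fun c => (c:ℝ)) ((p:ℝ) - 1)
          (fun c hc => by
            simp only [Finset.mem_Ico] at hc
            have : (c:ℝ) + 1 ≤ p := by exact_mod_cast Nat.succ_le_of_lt hc.2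
            linarith)
        rwa [Nat.card_Ico, nsmul_eq_mul, (show ((p - y : ℕ):ℝ) = (n:ℝ) by
          exact_mod_cast congrArg (Nat.cast : ℕ → ℝ) (show p - y = n by omega))] at this
      rw [hSb]
      have h1 : (1:ℝ)/n * ∑ c ∈ Finset.Ico y p, (c:ℝ) ≤ (p:ℝ) - 1 := by
        rw [div_mul_eq_mul_div, one_mul, div_le_iff₀ hnR]
        linarith [hbd]
      have : (p:ℝ) - 1 < (vh:ℝ) - p := by
        rw [hch]
        have h5 : (5:ℝ) ≤ n := by exact_mod_cast (show (5:ℕ) ≤ n by omega)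
        linarith
      linarith
    · rcases lt_trichotomy b p with hbp' | hbp' | hbp'
      · -- y ≤ b < p : the interesting case
        have hsplit : ∑ c ∈ Finset.Ico y p, util vh b c
            = (∑ c ∈ Finset.Ico y b, util vh b c) + ∑ c ∈ Finset.Ico b p, util vh b c :=
          (Finset.sum_Ico_consecutive _ hby (le_of_lt hbp')).symm
        have hsplit2 : ∑ c ∈ Finset.Ico b p, util vh b c
            = util vh b b + ∑ c ∈ Finset.Ico (b+1) p, util vh b c :=
          Finset.sum_eq_sum_Ico_succ_bot hbp' _
        have hlow : ∑ c ∈ Finset.Ico y b, util vh b c = ((b:ℝ) - y) * ((vh:ℝ) - b) := by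
          rw [Finset.sum_congr rfl (fun c hc => util_lt vh b c (by
            simp only [Finset.mem_Ico] at hc; exact hc.2))]
          rw [Finset.sum_const, Nat.card_Ico, nsmul_eq_mul, Nat.cast_sub hby]
        have hhigh0 : ∑ c ∈ Finset.Ico (b+1) p, util vh b c
            = ∑ c ∈ Finset.Ico (b+1) p, (c:ℝ) :=
          Finset.sum_congr rfl (fun c hc => util_gt vh b c (by
            simp only [Finset.mem_Ico] at hc; omega))
        have hhigh : ∑ c ∈ Finset.Ico (b+1) p, (c:ℝ) ≤ ((p:ℝ) - b - 1) * ((p:ℝ) - 1) := by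
          have h1 := Finset.sum_le_card_nsmul (Finset.Ico (b+1) p) (fun c => (c:ℝ)) ((p:ℝ) - 1)
            (fun c hc => by
              simp only [Finset.mem_Ico] at hc
              have : (c:ℝ) + 1 ≤ p := by exact_mod_cast Nat.succ_le_of_lt hc.2
              linarith)
          rw [Nat.card_Ico, nsmul_eq_mul, Nat.cast_sub (by omega)] at h1
          push_cast at h1
          linarith
        have hbR : (b:ℝ) + 1 ≤ p := by exact_mod_cast Nat.succ_le_of_lt hbp'
        have hbyR' : (y:ℝ) ≤ b := by exact_mod_cast hby
        have hn' : (n:ℝ) = (p:ℝ) - y := by rw [hpnR]; ring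
        have hid : (n:ℝ)*((vh:ℝ) - p)
            - (((b:ℝ) - y)*((vh:ℝ) - b) + (vh:ℝ)/2 + ((p:ℝ) - b - 1)*((p:ℝ) - 1))
            = ((p:ℝ) - b - 1)*(((p:ℝ) - b) + (2*(rh:ℝ) - 3*p + y + 2))
              + ((rh:ℝ) - 2*p + y + 1) := by
          rw [hch, hn']; ring
        have hprod : (0:ℝ) ≤ ((p:ℝ) - b - 1) * (((p:ℝ) - b) + (2*(rh:ℝ) - 3*p + y + 2)) := by
          apply mul_nonneg
          · linarith
          · have : 3*(p:ℝ) ≤ 2*rh + y + 1 := by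
              have : 3*p ≤ 2*rh + y + 1 := by omega
              exact_mod_cast this
            linarith
        have hbase : 2*(p:ℝ) ≤ (rh:ℝ) + y := by
          have : 2*p ≤ rh + y := by omega
          exact_mod_cast this
        have hSlt : ∑ c ∈ Finset.Ico y p, util vh b c < (n:ℝ) * ((vh:ℝ) - p) := by
          rw [hsplit, hsplit2, hlow, hhigh0, util_eq]
          linarith [hid, hprod, hbase, hhigh]
        calc (1:ℝ)/n * ∑ c ∈ Finset.Ico y p, util vh b c
            < (1:ℝ)/n * ((n:ℝ) * ((vh:ℝ) - p)) := by
              exact mul_lt_mul_of_pos_left hSlt (by positivity)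
          _ = (vh:ℝ) - p := heup
      · exact absurd hbp' hbp
      · -- b > p : eu = vh - b < vh - p
        have hSb : ∑ c ∈ Finset.Ico y p, util vh b c = (n:ℝ) * ((vh:ℝ) - b) := by
          rw [Finset.sum_congr rfl (fun c hc => util_lt vh b c (by
            simp only [Finset.mem_Ico] at hc; omega))]
          rw [Finset.sum_const, Nat.card_Ico, nsmul_eq_mul]
          congr 1
          exact_mod_cast congrArg (Nat.cast : ℕ → ℝ) (show p - y = n by omega)
        rw [hSb]
        have : (1:ℝ)/n * ((n:ℝ) * ((vh:ℝ) - b)) = (vh:ℝ) - b := by field_simp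
        rw [this]
        have : (p:ℝ) + 1 ≤ b := by exact_mod_cast Nat.succ_le_of_lt hbp'
        linarith
  -- strategies are valid
  have hstratl : IsStrategy pbar σl := by
    refine ⟨?_, ?_, ?_⟩
    · intro b; rw [hσl]; dsimp only; split_ifs
      · positivity
      · exact le_rfl
    · rw [hσl]
      rw [← Finset.sum_subset (show Finset.Ico y p ⊆ range (pbar+1) by
        intro c hc; simp only [Finset.mem_Ico] at hc; simp only [Finset.mem_range]; omega)]
      · rw [Finset.sum_congr rfl (fun c hc => by
          simp only [Finset.mem_Ico] at hc; rw [if_pos hc])]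
        rw [Finset.sum_const, Nat.card_Ico, nsmul_eq_mul,
          (show ((p - y : ℕ):ℝ) = (n:ℝ) by
            exact_mod_cast congrArg (Nat.cast : ℕ → ℝ) (show p - y = n by omega))]
        field_simp
      · intro c _ hc
        simp only [Finset.mem_Ico, not_and, not_lt] at hc
        have hnc : ¬(y ≤ c ∧ c < p) := by omega
        rw [if_neg hnc]
    · intro b hbig; rw [hσl]
      exact if_neg (by omega)
  have hstrath : IsStrategy pbar σh := by
    refine ⟨?_, ?_, ?_⟩
    · intro b; rw [hσh]; unfold pureS; split_ifs
      · norm_num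
      · exact le_rfl
    · rw [hσh]; unfold pureS
      rw [Finset.sum_ite_eq' (range (pbar+1)) p (fun _ => (1:ℝ))]
      rw [if_pos (Finset.mem_range.2 (by omega))]
    · intro b hbig; rw [hσh]; unfold pureS
      exact if_neg (by omega)
  -- l's best responses
  have hlbr : ∀ b ∈ range (pbar + 1), 0 < σl b →
      ∀ b' ∈ range (pbar + 1), eu pbar vl σh b' ≤ eu pbar vl σh b := by
    intro b _ hpos b' _
    rw [hσl] at hpos
    dsimp only at hpos
    have hbsup : y ≤ b ∧ b < p := by
      by_contra hcon
      rw [if_neg hcon] at hpos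
      exact lt_irrefl 0 hpos
    rw [hσh, eu_pure pbar vl p b hppbar', eu_pure pbar vl p b' hppbar']
    rw [util_gt vl b p hbsup.2]
    have hprl : (rl:ℝ) + 2 ≤ p := by
      have : rl + 2 ≤ p := by omega
      exact_mod_cast this
    rcases lt_trichotomy b' p with h | h | h
    · rw [util_gt vl b' p h]
    · subst h; rw [util_eq]
      rw [hcl]; linarith
    · rw [util_lt vl b' p h]
      have : (p:ℝ) + 1 ≤ b' := by exact_mod_cast Nat.succ_le_of_lt h
      rw [hcl]; linarith
  -- h's best responses
  have hhbr : ∀ b ∈ range (pbar + 1), 0 < σh b →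
      ∀ b' ∈ range (pbar + 1), eu pbar vh σl b' ≤ eu pbar vh σl b := by
    intro b _ hpos b' hb'
    rw [hσh] at hpos; unfold pureS at hpos
    have hbp : b = p := by
      by_contra hcon
      rw [if_neg hcon] at hpos
      exact lt_irrefl 0 hpos
    rw [hbp]
    rcases eq_or_ne b' p with h | h
    · rw [h]
    · exact le_of_lt (key b' hb' h)
  exact ⟨⟨hstratl, hstrath, hlbr, hhbr⟩, key⟩
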